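/- Let p > 1 and 0 ≤ γ < 1 − 1/p. Then the double series Σ over integer pairs (j,k) with 2j ≠ ±k of 1 / ( (2|j| + |k|)^{(1−γ)p} · |2|j| − |k||^p ) converges, where the sum excludes pairs with 2|j| = |k|. -/

import Mathlib

/-- For p > 1 and 0 ≤ γ < 1 − 1/p, the series
Σ_{(j,k), 2|j| ≠ |k|} 1/((2|j|+|k|)^{(1−γ)p} · |2|j|−|k||^p) converges. -/
theorem stmt2 (p γ : ℝ) (hp : 1 < p) (hγ0 : 0 ≤ γ) (hγ : γ < 1 - 1 / p) :
    Summable (fun jk : ℤ × ℤ =>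
      if 2 * |jk.1| = |jk.2| then (0 : ℝ)
      else 1 / (((2 * |jk.1| + |jk.2| : ℤ) : ℝ) ^ ((1 - γ) * p) *
        ((abs (2 * |jk.1| - |jk.2|) : ℤ) : ℝ) ^ p)) := by
  have hp0 : (0:ℝ) < p := lt_trans one_pos hp
  set s : ℝ := (1 - γ) * p with hs_def
  have hs1 : 1 < s := by
    have h1 : 1 / p < 1 - γ := by linarith
    calc (1:ℝ) = (1/p) * p := by field_simp
    _ < (1-γ) * p := mul_lt_mul_of_pos_right h1 hp0
  set K : ℤ → ℝ := fun d => |(d:ℝ)| ^ (-p) with hK_def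
  have hK : Summable K := Real.summable_abs_int_rpow hp
  have hK0 : ∀ d, 0 ≤ K d := fun d => Real.rpow_nonneg (abs_nonneg _) _
  set G : ℤ → ℝ := fun j => ((max (2 * |j|) 1 : ℤ) : ℝ) ^ (-s) with hG_def
  have hGpos : ∀ j, (0:ℝ) < ((max (2 * |j|) 1 : ℤ) : ℝ) := by
    intro j
    have : (1:ℤ) ≤ max (2 * |j|) 1 := le_max_right _ _
    exact_mod_cast lt_of_lt_of_le zero_lt_one this
  have hG0 : ∀ j, 0 ≤ G j := fun j => Real.rpow_nonneg (hGpos j).le _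
  -- Summability of G over ℤ
  have hnat : Summable (fun n : ℕ => G (n : ℤ)) := by
    have h1 : Summable (fun n : ℕ => ((n:ℝ)) ^ (-s)) :=
      Real.summable_nat_rpow.mpr (by linarith)
    have h2 : Summable (fun n : ℕ => ((n:ℝ) + 1) ^ (-s)) := by
      have := h1.comp_injective Nat.succ_injective
      refine this.congr fun n => ?_
      simp [Function.comp, Nat.succ_eq_add_one]
    refine Summable.of_nonneg_of_le (fun n => hG0 _) (fun n => ?_) h2
    have hle : ((n:ℝ) + 1) ≤ ((max (2 * |(n:ℤ)|) 1 : ℤ) : ℝ) := by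
      have : ((n:ℤ) + 1) ≤ max (2 * |(n:ℤ)|) 1 := by
        rcases Nat.eq_zero_or_pos n with h | h
        · subst h; simp
        · have h1 : (1:ℤ) ≤ (n:ℤ) := by exact_mod_cast h
          have : ((n:ℤ) + 1) ≤ 2 * |(n:ℤ)| := by
            rw [abs_of_nonneg (by linarith : (0:ℤ) ≤ (n:ℤ))]; linarith
          exact le_trans this (le_max_left _ _)
      exact_mod_cast this
    exact Real.rpow_le_rpow_of_nonpos (by positivity) hle (by linarith)
  have hGsum : Summable G := by
    apply Summable.of_nat_of_neg hnat
    refine hnat.congr fun n => ?_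
    simp [hG_def]
  -- the dominating function
  set F : ℤ × ℤ → ℝ := fun jk => G jk.1 * K (2 * |jk.1| - |jk.2|) with hF_def
  have hF0 : ∀ jk, 0 ≤ F jk := fun jk => mul_nonneg (hG0 _) (hK0 _)
  have hslice : ∀ j : ℤ, Summable (fun k : ℤ => K (2 * |j| - |k|)) := by
    intro j
    set m : ℤ := 2 * |j|
    have hA : Summable (fun k : ℤ => K (m - k)) :=
      hK.comp_injective sub_right_injective
    have hB : Summable (fun k : ℤ => K (m + k)) :=
      hK.comp_injective (add_right_injective m)
    refine Summable.of_nonneg_of_le (fun k => hK0 _) (fun k => ?_) (hA.add hB)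
    rcases abs_choice k with h | h
    · rw [h]; exact le_add_of_nonneg_right (hK0 _)
    · rw [h, sub_neg_eq_add]; exact le_add_of_nonneg_left (hK0 _)
  have htsum_bound : ∀ j : ℤ, (∑' k : ℤ, K (2 * |j| - |k|)) ≤ 2 * ∑' d, K d := by
    intro j
    set m : ℤ := 2 * |j|
    have hA : Summable (fun k : ℤ => K (m - k)) :=
      hK.comp_injective sub_right_injective
    have hB : Summable (fun k : ℤ => K (m + k)) :=
      hK.comp_injective (add_right_injective m)
    have hle : ∀ k : ℤ, K (m - |k|) ≤ K (m - k) + K (m + k) := by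
      intro k
      rcases abs_choice k with h | h
      · rw [h]; exact le_add_of_nonneg_right (hK0 _)
      · rw [h, sub_neg_eq_add]; exact le_add_of_nonneg_left (hK0 _)
    calc (∑' k : ℤ, K (m - |k|)) ≤ ∑' k : ℤ, (K (m - k) + K (m + k)) :=
          Summable.tsum_le_tsum hle (hslice j) (hA.add hB)
    _ = (∑' k : ℤ, K (m - k)) + ∑' k : ℤ, K (m + k) := hA.tsum_add hB
    _ = (∑' d, K d) + ∑' d, K d := by
          have e1 := (Equiv.subLeft m).tsum_eq K
          have e2 := (Equiv.addLeft m).tsum_eq K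
          simp only [Equiv.subLeft_apply] at e1
          simp only [Equiv.coe_addLeft] at e2
          rw [e1, e2]
    _ = 2 * ∑' d, K d := by ring
  have hFsum : Summable F := by
    rw [summable_prod_of_nonneg hF0]
    constructor
    · intro j
      exact (hslice j).mul_left (G j)
    · refine Summable.of_nonneg_of_le
        (fun j => tsum_nonneg fun k => mul_nonneg (hG0 _) (hK0 _))
        (fun j => ?_) (hGsum.mul_right (2 * ∑' d, K d))
      simp only [hF_def]
      rw [tsum_mul_left]
      exact mul_le_mul_of_nonneg_left (htsum_bound j) (hG0 j)
  refine Summable.of_nonneg_of_le (fun jk => ?_) (fun jk => ?_) hFsum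
  · try dsimp only
    split
    · exact le_rfl
    · have h1 : (0:ℝ) ≤ ((2 * |jk.1| + |jk.2| : ℤ) : ℝ) := by
        exact_mod_cast (show (0:ℤ) ≤ 2 * |jk.1| + |jk.2| by positivity)
      have h2 : (0:ℝ) ≤ ((abs (2 * |jk.1| - |jk.2|) : ℤ) : ℝ) := by
        exact_mod_cast abs_nonneg (2 * |jk.1| - |jk.2|)
      exact one_div_nonneg.mpr (mul_nonneg (Real.rpow_nonneg h1 _) (Real.rpow_nonneg h2 _))
  · obtain ⟨j, k⟩ := jk
    dsimp only
    split
    · exact hF0 (j, k)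
    · rename_i h
      set A : ℝ := ((2 * |j| + |k| : ℤ) : ℝ) with hA_def
      set B : ℝ := ((abs (2 * |j| - |k|) : ℤ) : ℝ) with hB_def
      have hd : (2 * |j| - |k| : ℤ) ≠ 0 := sub_ne_zero.mpr h
      have hB1 : (1:ℝ) ≤ B := by
        have h1 : (1:ℤ) ≤ abs (2 * |j| - |k|) := Int.one_le_abs hd
        rw [hB_def]; exact_mod_cast h1
      have hAint : (1:ℤ) ≤ 2 * |j| + |k| := by
        rcases lt_or_ge (2 * |j| + |k|) 1 with hlt | hle
        · exfalso
          have h1 : (0:ℤ) ≤ 2 * |j| := by positivity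
          have h2 : (0:ℤ) ≤ |k| := abs_nonneg _
          have hj : |j| = 0 := by omega
          have hk : |k| = 0 := by omega
          exact h (by rw [hj, hk]; ring)
        · exact hle
      have hMA : ((max (2 * |j|) 1 : ℤ) : ℝ) ≤ A := by
        have : (max (2 * |j|) 1 : ℤ) ≤ 2 * |j| + |k| := by
          have h2 : (0:ℤ) ≤ |k| := abs_nonneg _
          rcases max_cases (2 * |j|) 1 with ⟨hm, _⟩ | ⟨hm, _⟩ <;> omega
        rw [hA_def]; exact_mod_cast this
      have hA1 : (1:ℝ) ≤ A := by rw [hA_def]; exact_mod_cast hAint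
      have hA0 : (0:ℝ) < A := lt_of_lt_of_le zero_lt_one hA1
      have hB0 : (0:ℝ) < B := lt_of_lt_of_le zero_lt_one hB1
      have hKeq : K (2 * |j| - |k|) = B ^ (-p) := by
        rw [hK_def]
        congr 1
        rw [hB_def]
        push_cast [Int.cast_abs]
        simp [abs_abs]
      have hstep1 : 1 / (A ^ s * B ^ p) = A ^ (-s) * B ^ (-p) := by
        rw [Real.rpow_neg hA0.le, Real.rpow_neg hB0.le, one_div, mul_inv]
      rw [hstep1]
      show A ^ (-s) * B ^ (-p) ≤ G j * K (2 * |j| - |k|)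
      rw [hKeq]
      refine mul_le_mul_of_nonneg_right ?_ (Real.rpow_nonneg hB0.le _)
      exact Real.rpow_le_rpow_of_nonpos (hGpos j) hMA (by linarith)
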